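/- (Theorem 2, variance formula.) Let Y⁰, Y¹, Yᵃ, Yᵇ be mutually independent random variables, each exponentially distributed with rate 1. Let τ⁰ be the honest random time on [s,t] associated with the intensity λ0 and driven by Y⁰, and let τ¹, τ¹ₐ, τ¹ᵦ be the honest random times on [s,t] associated with the intensity λ1 and driven by Y¹, Yᵃ, Yᵇ respectively. Then Var(exp(-∫_{τ⁰}^t λ1(u) du)) = P(max(τ¹ₐ, τ¹ᵦ) ≤ τ⁰) - P(τ¹ ≤ τ⁰)². -/

import Mathlib

open MeasureTheory ProbabilityTheory Real

/-- The honest random time on `[s,t]` associated with the intensity `lam`,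
driven by the value `y`: `max (s, inf {r ∈ [s,t] : ∫_r^t lam ≤ y})`. -/
noncomputable def honestTime (s t : ℝ) (lam : ℝ → ℝ) (y : ℝ) : ℝ :=
  max s (sInf {r | r ∈ Set.Icc s t ∧ ∫ u in r..t, lam u ≤ y})


section Aux

variable {s t : ℝ} {lam : ℝ → ℝ}

lemma contF (hlam : Continuous lam) : Continuous (fun x : ℝ => ∫ u in x..t, lam u) := by
  have h := intervalIntegral.continuous_primitive
    (fun a b => (hlam.intervalIntegrable a b)) t (μ := volume)
  have : (fun x : ℝ => ∫ u in x..t, lam u) = fun x => -(∫ u in t..x, lam u) := by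
    funext x; rw [intervalIntegral.integral_symm]
  rw [this]; exact h.neg

lemma F_nonneg (hst : s ≤ t) (hlam_nonneg : ∀ u ∈ Set.Icc s t, 0 ≤ lam u)
    {x : ℝ} (hx : x ∈ Set.Icc s t) : 0 ≤ ∫ u in x..t, lam u :=
  intervalIntegral.integral_nonneg hx.2
    (fun u hu => hlam_nonneg u ⟨hx.1.trans hu.1, hu.2⟩)

lemma honestTime_le_iff (hlam : Continuous lam) (hst : s ≤ t)
    (hlam_nonneg : ∀ u ∈ Set.Icc s t, 0 ≤ lam u)
    {x y : ℝ} (hx : x ∈ Set.Icc s t) (hy : 0 ≤ y) :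
    honestTime s t lam y ≤ x ↔ ∫ u in x..t, lam u ≤ y := by
  set S : Set ℝ := {r | r ∈ Set.Icc s t ∧ ∫ u in r..t, lam u ≤ y} with hS
  have htS : t ∈ S := ⟨⟨hst, le_rfl⟩, by simpa [intervalIntegral.integral_same] using hy⟩
  have hbdd : BddBelow S := ⟨s, fun r hr => hr.1.1⟩
  constructor
  · intro hle
    have hclosed : IsClosed S := by
      have : S = Set.Icc s t ∩ (fun r : ℝ => ∫ u in r..t, lam u) ⁻¹' Set.Iic y := rfl
      rw [this]
      exact isClosed_Icc.inter (isClosed_Iic.preimage (contF hlam))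
    have hm : sInf S ∈ S := hclosed.csInf_mem ⟨t, htS⟩ hbdd
    have hmx : sInf S ≤ x := le_trans (le_max_right _ _) hle
    have hsplit : (∫ u in (sInf S)..x, lam u) + ∫ u in x..t, lam u = ∫ u in (sInf S)..t, lam u :=
      intervalIntegral.integral_add_adjacent_intervals
        (hlam.intervalIntegrable _ _) (hlam.intervalIntegrable _ _)
    have hnn : 0 ≤ ∫ u in (sInf S)..x, lam u :=
      intervalIntegral.integral_nonneg hmx
        (fun u hu => hlam_nonneg u ⟨hm.1.1.trans hu.1, hu.2.trans hx.2⟩)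
    have := hm.2
    linarith
  · intro hFx
    have hxS : x ∈ S := ⟨hx, hFx⟩
    exact max_le hx.1 (csInf_le hbdd hxS)

lemma honestTime_mem (hlam : Continuous lam) (hst : s ≤ t)
    (hlam_nonneg : ∀ u ∈ Set.Icc s t, 0 ≤ lam u) {y : ℝ} (hy : 0 ≤ y) :
    honestTime s t lam y ∈ Set.Icc s t := by
  refine ⟨le_max_left _ _, ?_⟩
  rw [honestTime_le_iff hlam hst hlam_nonneg ⟨hst, le_rfl⟩ hy]
  simpa [intervalIntegral.integral_same] using hy

lemma honestTime_measurable (hs : 0 ≤ s) (hst : s ≤ t) (hlam : Continuous lam)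
    (hlam_nonneg : ∀ u ∈ Set.Icc s t, 0 ≤ lam u) :
    Measurable (honestTime s t lam) := by
  classical
  have hanti : ∀ a b : ℝ, 0 ≤ a → a ≤ b → honestTime s t lam b ≤ honestTime s t lam a := by
    intro a b ha hab
    have h1 := honestTime_le_iff hlam hst hlam_nonneg
      (honestTime_mem hlam hst hlam_nonneg ha) (ha.trans hab)
    rw [h1]
    have h2 := (honestTime_le_iff hlam hst hlam_nonneg
      (honestTime_mem hlam hst hlam_nonneg ha) ha).mp le_rfl
    linarith
  have heq : honestTime s t lam =
      (Set.Iio (0:ℝ)).piecewise (fun _ => s) (fun y => honestTime s t lam (max y 0)) := by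
    funext y
    by_cases hy : y < 0
    · simp only [Set.piecewise, if_pos (show y ∈ Set.Iio 0 from hy)]
      have hempty : {r | r ∈ Set.Icc s t ∧ ∫ u in r..t, lam u ≤ y} = ∅ := by
        ext r
        simp only [Set.mem_setOf_eq, Set.mem_empty_iff_false, iff_false, not_and]
        intro hr
        have := F_nonneg hst hlam_nonneg hr
        intro h; linarith
      rw [honestTime, hempty, Real.sInf_empty, max_eq_left hs]
    · simp only [Set.piecewise, if_neg (show y ∉ Set.Iio 0 from hy)]
      rw [max_eq_left (not_lt.1 hy)]
  rw [heq]
  refine Measurable.piecewise measurableSet_Iio measurable_const ?_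
  refine Antitone.measurable (fun a b hab => ?_)
  exact hanti _ _ (le_max_right _ _) (max_le_max hab le_rfl)

lemma expMeasure_apply {A : Set ℝ} (hA : MeasurableSet A) :
    expMeasure 1 A = ∫⁻ x in A, exponentialPDF 1 x := by
  rw [expMeasure, gammaMeasure, withDensity_apply _ hA]; rfl

lemma expMeasure_Ici {c : ℝ} (hc : 0 ≤ c) :
    expMeasure 1 (Set.Ici c) = ENNReal.ofReal (Real.exp (-c)) := by
  rw [expMeasure_apply measurableSet_Ici]
  have h1 : ∫⁻ x in Set.Ici c, exponentialPDF 1 x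
      = ∫⁻ x in Set.Ici c, ENNReal.ofReal (Real.exp (-x)) := by
    refine setLIntegral_congr_fun measurableSet_Ici (fun x hx => ?_)
    rw [exponentialPDF_of_nonneg (hc.trans hx)]
    norm_num
  rw [h1]
  have hint : IntegrableOn (fun x => Real.exp (-x)) (Set.Ici c) := by
    rw [integrableOn_Ici_iff_integrableOn_Ioi]
    simpa using exp_neg_integrableOn_Ioi c one_pos
  rw [← ofReal_integral_eq_lintegral_ofReal hint (ae_of_all _ (fun x => (Real.exp_pos _).le))]
  rw [MeasureTheory.integral_Ici_eq_integral_Ioi, integral_exp_neg_Ioi]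

lemma expMeasure_Iio_zero : expMeasure 1 (Set.Iio 0) = 0 := by
  rw [expMeasure_apply measurableSet_Iio]
  exact lintegral_exponentialPDF_of_nonpos le_rfl

lemma expMeasure_ae_nonneg : ∀ᵐ y ∂(expMeasure 1), 0 ≤ y := by
  rw [ae_iff]
  have : {y : ℝ | ¬ 0 ≤ y} = Set.Iio 0 := by ext y; simp
  rw [this]; exact expMeasure_Iio_zero

end Aux

/-- Theorem 2 (variance formula): with `τ⁰` the honest time on `[s,t]` associated with `λ₀`
driven by `Y⁰`, and `τ¹, τ¹ₐ, τ¹ᵦ` the honest times associated with `λ₁` driven by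
`Y¹, Yᵃ, Yᵇ`, where `Y⁰, Y¹, Yᵃ, Yᵇ` are mutually independent `Exp(1)` random variables,
`Var(exp (-∫_{τ⁰}^t λ₁(u) du)) = P(max (τ¹ₐ, τ¹ᵦ) ≤ τ⁰) - P(τ¹ ≤ τ⁰)²`. -/
theorem variance_estimator_P11
    {Ω : Type*} [MeasurableSpace Ω] (P : Measure Ω) [IsProbabilityMeasure P]
    (s t : ℝ) (hs : 0 ≤ s) (hst : s < t)
    (lam0 lam1 : ℝ → ℝ) (hlam0 : Continuous lam0) (hlam1 : Continuous lam1)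
    (hlam0_nonneg : ∀ u ∈ Set.Icc s t, 0 ≤ lam0 u)
    (hlam1_nonneg : ∀ u ∈ Set.Icc s t, 0 ≤ lam1 u)
    (Y0 Y1 Ya Yb : Ω → ℝ)
    (hY0 : Measurable Y0) (hY1 : Measurable Y1) (hYa : Measurable Ya) (hYb : Measurable Yb)
    (hY0law : P.map Y0 = expMeasure 1) (hY1law : P.map Y1 = expMeasure 1)
    (hYalaw : P.map Ya = expMeasure 1) (hYblaw : P.map Yb = expMeasure 1)
    (hindep : iIndepFun ![Y0, Y1, Ya, Yb] P) :
    variance (fun ω => Real.exp (-(∫ u in (honestTime s t lam0 (Y0 ω))..t, lam1 u))) P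
      = (P {ω | max (honestTime s t lam1 (Ya ω)) (honestTime s t lam1 (Yb ω))
            ≤ honestTime s t lam0 (Y0 ω)}).toReal
        - ((P {ω | honestTime s t lam1 (Y1 ω) ≤ honestTime s t lam0 (Y0 ω)}).toReal) ^ 2 := by
  set μ : Measure ℝ := expMeasure 1 with hμdef
  haveI : IsProbabilityMeasure μ := isProbabilityMeasure_expMeasure one_pos
  set g : ℝ → ℝ := fun y => ∫ u in (honestTime s t lam0 y)..t, lam1 u with hgdef
  have hg_meas : Measurable g :=
    (contF hlam1).measurable.comp (honestTime_measurable hs hst.le hlam0 hlam0_nonneg)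
  have hg_nonneg : ∀ y : ℝ, 0 ≤ y → 0 ≤ g y := fun y hy =>
    F_nonneg hst.le hlam1_nonneg (honestTime_mem hlam0 hst.le hlam0_nonneg hy)
  set G : ℝ → ℝ := fun y => Real.exp (-(g y)) with hGdef
  have hG_meas : Measurable G := Real.measurable_exp.comp hg_meas.neg
  have hG_pos : ∀ y, 0 < G y := fun y => Real.exp_pos _
  have hG_bd : ∀ᵐ y ∂μ, ‖G y‖ ≤ 1 := by
    filter_upwards [expMeasure_ae_nonneg] with y hy
    rw [Real.norm_eq_abs, abs_of_pos (hG_pos y)]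
    exact Real.exp_le_one_iff.2 (neg_nonpos.2 (hg_nonneg y hy))
  have hG_int : Integrable G μ :=
    memLp_one_iff_integrable.mp (MemLp.of_bound hG_meas.aestronglyMeasurable 1 hG_bd)
  have hG2_int : Integrable (fun y => G y ^ 2) μ := by
    refine memLp_one_iff_integrable.mp
      (MemLp.of_bound ((hG_meas.pow_const 2).aestronglyMeasurable) 1 ?_)
    filter_upwards [hG_bd] with y hy
    rw [Real.norm_eq_abs, abs_pow]
    calc |G y| ^ 2 ≤ 1 ^ 2 := by
          exact pow_le_pow_left₀ (abs_nonneg _) (by rwa [Real.norm_eq_abs] at hy) 2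
      _ = 1 := one_pow 2
  have hae : ∀ (Y : Ω → ℝ), Measurable Y → P.map Y = μ → ∀ᵐ ω ∂P, 0 ≤ Y ω := by
    intro Y hY hlaw
    have h := expMeasure_ae_nonneg
    rw [← hμdef, ← hlaw] at h
    exact (ae_map_iff hY.aemeasurable measurableSet_Ici).1 h
  have hμIci : ∀ᵐ y ∂μ, μ (Set.Ici (g y)) = ENNReal.ofReal (G y) := by
    filter_upwards [expMeasure_ae_nonneg] with y hy
    exact expMeasure_Ici (hg_nonneg y hy)
  -- mass 1
  have hA : MeasurableSet {p : ℝ × ℝ | g p.1 ≤ p.2} :=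
    measurableSet_le (hg_meas.comp measurable_fst) measurable_snd
  have hi01 : IndepFun Y0 Y1 P := hindep.indepFun (show (0 : Fin 4) ≠ 1 by decide)
  have hpairlaw : P.map (fun ω => (Y0 ω, Y1 ω)) = μ.prod μ := by
    have h := (indepFun_iff_map_prod_eq_prod_map_map hY0.aemeasurable hY1.aemeasurable).1 hi01
    rw [hY0law, hY1law] at h
    exact h
  have hAeq : {ω | honestTime s t lam1 (Y1 ω) ≤ honestTime s t lam0 (Y0 ω)}
      =ᵐ[P] ((fun ω => (Y0 ω, Y1 ω)) ⁻¹' {p : ℝ × ℝ | g p.1 ≤ p.2}) := by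
    filter_upwards [hae Y0 hY0 hY0law, hae Y1 hY1 hY1law] with ω h0 h1
    have hmem := honestTime_mem hlam0 hst.le hlam0_nonneg h0
    show (honestTime s t lam1 (Y1 ω) ≤ honestTime s t lam0 (Y0 ω))
        = (g (Y0 ω) ≤ Y1 ω)
    exact eq_iff_iff.2 (honestTime_le_iff hlam1 hst.le hlam1_nonneg hmem h1)
  have mass1 : P {ω | honestTime s t lam1 (Y1 ω) ≤ honestTime s t lam0 (Y0 ω)}
      = ENNReal.ofReal (∫ y, G y ∂μ) := by
    rw [measure_congr hAeq, ← Measure.map_apply (hY0.prodMk hY1) hA, hpairlaw,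
      Measure.prod_apply hA]
    have h1 : ∫⁻ y, μ (Prod.mk y ⁻¹' {p : ℝ × ℝ | g p.1 ≤ p.2}) ∂μ
        = ∫⁻ y, ENNReal.ofReal (G y) ∂μ := by
      refine lintegral_congr_ae ?_
      filter_upwards [hμIci] with y hy
      rw [show Prod.mk y ⁻¹' {p : ℝ × ℝ | g p.1 ≤ p.2} = Set.Ici (g y) from rfl, hy]
    rw [h1, ← ofReal_integral_eq_lintegral_ofReal hG_int
      (ae_of_all _ fun y => (hG_pos y).le)]
  -- mass 2
  have hB : MeasurableSet {p : ℝ × ℝ × ℝ | g p.1 ≤ p.2.1 ∧ g p.1 ≤ p.2.2} := by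
    have h1 : MeasurableSet {p : ℝ × ℝ × ℝ | g p.1 ≤ p.2.1} :=
      measurableSet_le (hg_meas.comp measurable_fst) (measurable_fst.comp measurable_snd)
    have h2 : MeasurableSet {p : ℝ × ℝ × ℝ | g p.1 ≤ p.2.2} :=
      measurableSet_le (hg_meas.comp measurable_fst) (measurable_snd.comp measurable_snd)
    exact h1.inter h2
  have hmeasvec : ∀ i, Measurable (![Y0, Y1, Ya, Yb] i) := by
    intro i
    fin_cases i
    · exact hY0
    · exact hY1
    · exact hYa
    · exact hYb
  have hiab : IndepFun Ya Yb P := hindep.indepFun (show (2 : Fin 4) ≠ 3 by decide)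
  have hpairab : P.map (fun ω => (Ya ω, Yb ω)) = μ.prod μ := by
    have h := (indepFun_iff_map_prod_eq_prod_map_map hYa.aemeasurable hYb.aemeasurable).1 hiab
    rw [hYalaw, hYblaw] at h
    exact h
  have hi0ab : IndepFun Y0 (fun ω => (Ya ω, Yb ω)) P :=
    (hindep.indepFun_prodMk hmeasvec 2 3 0 (by decide) (by decide)).symm
  have hpair2law : P.map (fun ω => (Y0 ω, (Ya ω, Yb ω))) = μ.prod (μ.prod μ) := by
    have h := (indepFun_iff_map_prod_eq_prod_map_map hY0.aemeasurable
      (hYa.prodMk hYb).aemeasurable).1 hi0ab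
    rw [hY0law, hpairab] at h
    exact h
  have hBeq : {ω | max (honestTime s t lam1 (Ya ω)) (honestTime s t lam1 (Yb ω))
        ≤ honestTime s t lam0 (Y0 ω)}
      =ᵐ[P] ((fun ω => (Y0 ω, (Ya ω, Yb ω))) ⁻¹'
        {p : ℝ × ℝ × ℝ | g p.1 ≤ p.2.1 ∧ g p.1 ≤ p.2.2}) := by
    filter_upwards [hae Y0 hY0 hY0law, hae Ya hYa hYalaw, hae Yb hYb hYblaw] with ω h0 ha hb
    have hmem := honestTime_mem hlam0 hst.le hlam0_nonneg h0
    show (max (honestTime s t lam1 (Ya ω)) (honestTime s t lam1 (Yb ω))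
        ≤ honestTime s t lam0 (Y0 ω)) = (g (Y0 ω) ≤ Ya ω ∧ g (Y0 ω) ≤ Yb ω)
    rw [eq_iff_iff, max_le_iff,
      honestTime_le_iff hlam1 hst.le hlam1_nonneg hmem ha,
      honestTime_le_iff hlam1 hst.le hlam1_nonneg hmem hb]
  have mass2 : P {ω | max (honestTime s t lam1 (Ya ω)) (honestTime s t lam1 (Yb ω))
        ≤ honestTime s t lam0 (Y0 ω)}
      = ENNReal.ofReal (∫ y, G y ^ 2 ∂μ) := by
    rw [measure_congr hBeq, ← Measure.map_apply (hY0.prodMk (hYa.prodMk hYb)) hB,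
      hpair2law, Measure.prod_apply hB]
    have h1 : ∫⁻ y, (μ.prod μ)
        (Prod.mk y ⁻¹' {p : ℝ × ℝ × ℝ | g p.1 ≤ p.2.1 ∧ g p.1 ≤ p.2.2}) ∂μ
        = ∫⁻ y, ENNReal.ofReal (G y ^ 2) ∂μ := by
      refine lintegral_congr_ae ?_
      filter_upwards [hμIci] with y hy
      rw [show Prod.mk y ⁻¹' {p : ℝ × ℝ × ℝ | g p.1 ≤ p.2.1 ∧ g p.1 ≤ p.2.2}
          = Set.Ici (g y) ×ˢ Set.Ici (g y) from rfl,
        Measure.prod_prod, hy, ← ENNReal.ofReal_mul (hG_pos y).le, ← sq]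
    rw [h1, ← ofReal_integral_eq_lintegral_ofReal hG2_int
      (ae_of_all _ fun y => sq_nonneg _)]
  -- variance computation
  have hM2 : MemLp (fun ω => G (Y0 ω)) 2 P := by
    refine MemLp.of_bound ((hG_meas.comp hY0).aestronglyMeasurable) 1 ?_
    filter_upwards [hae Y0 hY0 hY0law] with ω h0
    rw [Real.norm_eq_abs, abs_of_pos (hG_pos _)]
    exact Real.exp_le_one_iff.2 (neg_nonpos.2 (hg_nonneg _ h0))
  have hvar : variance (fun ω => G (Y0 ω)) P
      = (∫ y, G y ^ 2 ∂μ) - (∫ y, G y ∂μ) ^ 2 := by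
    rw [variance_eq_sub hM2]
    have e1 : ∫ ω, ((fun ω => G (Y0 ω)) ^ 2) ω ∂P = ∫ y, G y ^ 2 ∂μ := by
      simp only [Pi.pow_apply]
      rw [← hY0law]
      exact (integral_map hY0.aemeasurable
        ((hG_meas.pow_const 2).aestronglyMeasurable)).symm
    have e2 : ∫ ω, G (Y0 ω) ∂P = ∫ y, G y ∂μ := by
      rw [← hY0law]
      exact (integral_map hY0.aemeasurable hG_meas.aestronglyMeasurable).symm
    rw [e1, e2]
  have hInt1 : 0 ≤ ∫ y, G y ∂μ := integral_nonneg fun y => (hG_pos y).le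
  have hInt2 : 0 ≤ ∫ y, G y ^ 2 ∂μ := integral_nonneg fun y => sq_nonneg _
  rw [mass1, mass2, ENNReal.toReal_ofReal hInt1, ENNReal.toReal_ofReal hInt2]
  exact hvar
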